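/- Under the RSR model Y = Xβ + (I−P)γ + ε with γ ~ N(0, σ²G), ε ~ N(0, σ²I) independent, the OLS/GLS estimator β̂ = (XᵀX)⁻¹XᵀY is unbiased for β and has covariance matrix σ²(XᵀX)⁻¹, identical to the OLS covariance under the non-spatial model Y = Xβ + ε. -/

import Mathlib

open Matrix MeasureTheory

/-- Under the RSR model `Y = Xβ + (I−P)γ + ε` with `γ` mean-zero with covariance `σ²G`,
`ε` mean-zero with covariance `σ²I`, uncorrelated with `γ`, the OLS estimator
`β̂ = (XᵀX)⁻¹XᵀY` is unbiased with covariance `σ²(XᵀX)⁻¹`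
(identical to OLS under the non-spatial model). -/
theorem stmt_12 {Ω : Type*} [MeasurableSpace Ω] (μ : Measure Ω) [IsProbabilityMeasure μ]
    (n p : ℕ) (X : Matrix (Fin n) (Fin p) ℝ) (hX : IsUnit (Xᵀ * X).det)
    (G : Matrix (Fin n) (Fin n) ℝ) (hG : G.PosSemidef) (σ2 : ℝ) (hσ : 0 < σ2)
    (β : Fin p → ℝ) (γ ε : Ω → Fin n → ℝ) (Y : Ω → Fin n → ℝ)
    (P : Matrix (Fin n) (Fin n) ℝ) (hP : P = X * (Xᵀ * X)⁻¹ * Xᵀ)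
    (hY : ∀ ω, Y ω = X.mulVec β + ((1 : Matrix (Fin n) (Fin n) ℝ) - P).mulVec (γ ω) + ε ω)
    (hmγ : ∀ i, ∫ ω, γ ω i ∂μ = 0) (hmε : ∀ i, ∫ ω, ε ω i ∂μ = 0)
    (hcγ : ∀ i j, ∫ ω, γ ω i * γ ω j ∂μ = σ2 * G i j)
    (hcε : ∀ i j, ∫ ω, ε ω i * ε ω j ∂μ = σ2 * (1 : Matrix (Fin n) (Fin n) ℝ) i j)
    (hcγε : ∀ i j, ∫ ω, γ ω i * ε ω j ∂μ = 0)
    (hintγ : ∀ i, Integrable (fun ω => γ ω i) μ)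
    (hintε : ∀ i, Integrable (fun ω => ε ω i) μ)
    (hint2γ : ∀ i j, Integrable (fun ω => γ ω i * γ ω j) μ)
    (hint2ε : ∀ i j, Integrable (fun ω => ε ω i * ε ω j) μ)
    (hint2γε : ∀ i j, Integrable (fun ω => γ ω i * ε ω j) μ) :
    let βhat : Ω → Fin p → ℝ := fun ω => ((Xᵀ * X)⁻¹ * Xᵀ).mulVec (Y ω)
    (∀ j, ∫ ω, βhat ω j ∂μ = β j) ∧
    (∀ j k, ∫ ω, (βhat ω j - β j) * (βhat ω k - β k) ∂μ = σ2 * ((Xᵀ * X)⁻¹) j k) := by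
  intro βhat
  set A : Matrix (Fin p) (Fin n) ℝ := (Xᵀ * X)⁻¹ * Xᵀ with hA
  have hAX : A * X = 1 := by
    rw [hA, Matrix.mul_assoc, Matrix.nonsing_inv_mul _ hX]
  have hAP : A * P = A := by
    rw [hP, ← Matrix.mul_assoc, ← Matrix.mul_assoc, hAX, Matrix.one_mul]
  have hA1P : A * ((1 : Matrix (Fin n) (Fin n) ℝ) - P) = 0 := by
    rw [Matrix.mul_sub, Matrix.mul_one, hAP, sub_self]
  have hdiff : ∀ ω j, βhat ω j - β j = ∑ i, A j i * ε ω i := by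
    intro ω j
    have : βhat ω = β + A.mulVec (ε ω) := by
      show A.mulVec (Y ω) = _
      rw [hY ω, Matrix.mulVec_add, Matrix.mulVec_add, Matrix.mulVec_mulVec, hAX,
        Matrix.one_mulVec, Matrix.mulVec_mulVec, hA1P, Matrix.zero_mulVec, add_zero]
    rw [this]
    simp [Matrix.mulVec, dotProduct]
  have hval : ∀ ω j, βhat ω j = β j + ∑ i, A j i * ε ω i := by
    intro ω j
    have := hdiff ω j
    linarith
  constructor
  · intro j
    have h1 : Integrable (fun ω => ∑ i, A j i * ε ω i) μ :=
      integrable_finset_sum _ (fun i _ => (hintε i).const_mul _)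
    calc ∫ ω, βhat ω j ∂μ = ∫ ω, (β j + ∑ i, A j i * ε ω i) ∂μ := by
          exact integral_congr_ae (Filter.Eventually.of_forall (fun ω => hval ω j))
      _ = β j + ∑ i, A j i * ∫ ω, ε ω i ∂μ := by
          rw [integral_add (integrable_const _) h1, integral_const, probReal_univ,
            one_smul, integral_finset_sum _ (fun i _ => (hintε i).const_mul _)]
          simp [integral_const_mul]
      _ = β j := by simp [hmε]
  · intro j k
    have key : ∀ ω, (βhat ω j - β j) * (βhat ω k - β k)
        = ∑ i, ∑ l, (A j i * A k l) * (ε ω i * ε ω l) := by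
      intro ω
      rw [hdiff ω j, hdiff ω k, Finset.sum_mul_sum]
      apply Finset.sum_congr rfl; intro i _
      apply Finset.sum_congr rfl; intro l _
      ring
    calc ∫ ω, (βhat ω j - β j) * (βhat ω k - β k) ∂μ
        = ∫ ω, ∑ i, ∑ l, (A j i * A k l) * (ε ω i * ε ω l) ∂μ :=
          integral_congr_ae (Filter.Eventually.of_forall key)
      _ = ∑ i, ∑ l, (A j i * A k l) * ∫ ω, ε ω i * ε ω l ∂μ := by
          rw [integral_finset_sum _ (fun i _ =>
            integrable_finset_sum _ (fun l _ => (hint2ε i l).const_mul _))]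
          refine Finset.sum_congr rfl (fun i _ => ?_)
          rw [integral_finset_sum _ (fun l _ => (hint2ε i l).const_mul _)]
          exact Finset.sum_congr rfl (fun l _ => integral_const_mul _ _)
      _ = σ2 * ∑ i, A j i * A k i := by
          rw [Finset.mul_sum]
          refine Finset.sum_congr rfl (fun i _ => ?_)
          rw [Finset.sum_eq_single i]
          · rw [hcε i i]; simp [Matrix.one_apply]; ring
          · intro l _ hl
            rw [hcε i l, Matrix.one_apply_ne (Ne.symm hl)]
            ring
          · intro h; exact absurd (Finset.mem_univ i) h
      _ = σ2 * ((Xᵀ * X)⁻¹) j k := by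
          congr 1
          have hAAT : A * Aᵀ = (Xᵀ * X)⁻¹ := by
            rw [hA, Matrix.transpose_mul, Matrix.transpose_transpose,
              Matrix.transpose_nonsing_inv, Matrix.transpose_mul, Matrix.transpose_transpose]
            calc (Xᵀ * X)⁻¹ * Xᵀ * (X * (Xᵀ * X)⁻¹)
                = (Xᵀ * X)⁻¹ * (Xᵀ * X) * (Xᵀ * X)⁻¹ := by
                  rw [Matrix.mul_assoc, Matrix.mul_assoc, Matrix.mul_assoc]
              _ = (Xᵀ * X)⁻¹ := by rw [Matrix.nonsing_inv_mul _ hX, Matrix.one_mul]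
          rw [← hAAT]
          simp [Matrix.mul_apply, Matrix.transpose_apply]
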